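/- Let Ω = (M, ⟨·,·⟩_M, D_M, A, L_A) be an (F,G,H)-metrized quantum vector bundle. For every r > 0, the modular Monge–Kantorovich metric mkD_Ω metrizes the A-weak topology on the ball {ω ∈ M : D_M(ω) ≤ r}, and therefore it metrizes the ‖·‖_M-topology on this ball. -/

import Mathlib

open scoped ComplexOrder

noncomputable section

/-! ### Admissible functions -/

/-- A function `F : [0,∞)⁴ → [0,∞)` is admissible when it is nondecreasing in each argument
and dominates `x₁x₃ + x₂x₄`. -/
def Admissible (F : ℝ → ℝ → ℝ → ℝ → ℝ) : Prop :=
  (∀ x₁ x₂ x₃ x₄ y₁ y₂ y₃ y₄ : ℝ, 0 ≤ x₁ → 0 ≤ x₂ → 0 ≤ x₃ → 0 ≤ x₄ →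
      x₁ ≤ y₁ → x₂ ≤ y₂ → x₃ ≤ y₃ → x₄ ≤ y₄ → F x₁ x₂ x₃ x₄ ≤ F y₁ y₂ y₃ y₄) ∧
  (∀ x₁ x₂ x₃ x₄ : ℝ, 0 ≤ x₁ → 0 ≤ x₂ → 0 ≤ x₃ → 0 ≤ x₄ →
      x₁ * x₃ + x₂ * x₄ ≤ F x₁ x₂ x₃ x₄)

/-- An admissible triple `(F,G,H)`. -/
def AdmissibleTriple (F : ℝ → ℝ → ℝ → ℝ → ℝ) (G : ℝ → ℝ → ℝ → ℝ) (H : ℝ → ℝ → ℝ) : Prop :=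
  Admissible F ∧
  (∀ x y z x' y' z' : ℝ, 0 ≤ x → 0 ≤ y → 0 ≤ z → x ≤ x' → y ≤ y' → z ≤ z' →
      G x y z ≤ G x' y' z') ∧
  (∀ x y z : ℝ, 0 ≤ x → 0 ≤ y → 0 ≤ z → (x + y) * z ≤ G x y z) ∧
  (∀ x y x' y' : ℝ, 0 ≤ x → 0 ≤ y → x ≤ x' → y ≤ y' → H x y ≤ H x' y') ∧
  (∀ x y : ℝ, 0 ≤ x → 0 ≤ y → 2 * x * y ≤ H x y)

section ReIm

variable {A : Type*} [NormedRing A] [StarRing A] [NormedAlgebra ℂ A]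

/-- The real part `(a + a*)/2` of an element of a complex `*`-algebra. -/
def reEl (a : A) : A := (2⁻¹ : ℂ) • (a + star a)

/-- The imaginary part `(a - a*)/(2i)` of an element of a complex `*`-algebra. -/
def imEl (a : A) : A := ((2 * Complex.I)⁻¹ : ℂ) • (a - star a)

end ReIm

/-! ### States -/

/-- A state on a unital complex `*`-algebra: a linear functional which is unital
and positive. -/
structure CState (A : Type*) [NormedRing A] [StarRing A] [NormedAlgebra ℂ A] where
  toFun : A →ₗ[ℂ] ℂ
  map_one : toFun 1 = 1
  positive : ∀ a : A, 0 ≤ toFun (star a * a)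

/-- The topology induced by a distance function, generated by its open balls. -/
def ballTopology {X : Type*} (d : X → X → ℝ) : TopologicalSpace X :=
  TopologicalSpace.generateFrom {s | ∃ (x : X) (ε : ℝ), 0 < ε ∧ s = {y | d x y < ε}}

/-- The Hausdorff distance between two sets, relative to a distance function. -/
def hausDist {X : Type*} (d : X → X → ℝ) (S T : Set X) : ℝ :=
  max (sSup {r | ∃ x ∈ S, r = sInf {s | ∃ y ∈ T, s = d x y}})
      (sSup {r | ∃ y ∈ T, r = sInf {s | ∃ x ∈ S, s = d x y}})

/-- The diameter of a set relative to a distance function. -/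
def setDiam {X : Type*} (d : X → X → ℝ) (S : Set X) : ℝ :=
  sSup {r | ∃ x ∈ S, ∃ y ∈ S, r = d x y}

/-- The weak-* topology on the state space. -/
def stateWeakTopology (A : Type*) [NormedRing A] [StarRing A] [NormedAlgebra ℂ A] :
    TopologicalSpace (CState A) :=
  TopologicalSpace.induced (fun (φ : CState A) (a : A) => φ.toFun a) Pi.topologicalSpace

/-- The Monge-Kantorovich metric associated with a Lipschitz seminorm `L` with domain `dom`. -/
def mkDist {A : Type*} [NormedRing A] [StarRing A] [NormedAlgebra ℂ A]
    (dom : Set A) (L : A → ℝ) (φ ψ : CState A) : ℝ :=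
  sSup {r | ∃ a ∈ dom, L a ≤ 1 ∧ r = ‖φ.toFun a - ψ.toFun a‖}

/-- The 1-level set of a pivot is nonempty. -/
def pivotLevelNonempty {D : Type*} [NormedRing D] [StarRing D] [NormedAlgebra ℂ D]
    (x : D) : Prop :=
  ∃ φ : CState D,
    φ.toFun (star (1 - x) * (1 - x)) = 0 ∧ φ.toFun ((1 - x) * star (1 - x)) = 0

/-! ### Quasi-Leibniz quantum compact metric spaces -/

/-- An `F`-quasi-Leibniz quantum compact metric space structure on a unital C*-algebra `A`:
a Lipschitz seminorm `L` defined on a dense Jordan-Lie subalgebra `dom` of the self-adjoint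
part of `A`, vanishing exactly on `ℝ1`, lower semicontinuous, whose Monge-Kantorovich metric
metrizes the weak-* topology on the state space, and satisfying the `F`-quasi-Leibniz
inequality. -/
structure QLSpace (A : Type*) [NormedRing A] [StarRing A] [CStarRing A]
    [NormedAlgebra ℂ A] [StarModule ℂ A] [CompleteSpace A]
    (F : ℝ → ℝ → ℝ → ℝ → ℝ) where
  dom : Set A
  L : A → ℝ
  dom_selfAdjoint : ∀ a ∈ dom, IsSelfAdjoint a
  dom_dense : closure dom = {a : A | IsSelfAdjoint a}
  dom_add : ∀ a ∈ dom, ∀ b ∈ dom, a + b ∈ dom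
  dom_smul : ∀ (t : ℝ), ∀ a ∈ dom, (t : ℂ) • a ∈ dom
  dom_jordan : ∀ a ∈ dom, ∀ b ∈ dom, (2⁻¹ : ℂ) • (a * b + b * a) ∈ dom
  dom_lie : ∀ a ∈ dom, ∀ b ∈ dom, ((2 * Complex.I)⁻¹ : ℂ) • (a * b - b * a) ∈ dom
  one_mem : (1 : A) ∈ dom
  L_nonneg : ∀ a : A, 0 ≤ L a
  L_add : ∀ a ∈ dom, ∀ b ∈ dom, L (a + b) ≤ L a + L b
  L_smul : ∀ (t : ℝ), ∀ a ∈ dom, L ((t : ℂ) • a) = |t| * L a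
  L_eq_zero_iff : ∀ a ∈ dom, (L a = 0 ↔ ∃ t : ℝ, a = (t : ℂ) • (1 : A))
  lowerSemicontinuous : IsClosed {a : A | a ∈ dom ∧ L a ≤ 1}
  leibniz_jordan : ∀ a ∈ dom, ∀ b ∈ dom,
      L ((2⁻¹ : ℂ) • (a * b + b * a)) ≤ F ‖a‖ ‖b‖ (L a) (L b)
  leibniz_lie : ∀ a ∈ dom, ∀ b ∈ dom,
      L (((2 * Complex.I)⁻¹ : ℂ) • (a * b - b * a)) ≤ F ‖a‖ ‖b‖ (L a) (L b)
  mk_metrizes : ballTopology (mkDist dom L) = stateWeakTopology A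
/-! ### Metrized quantum vector bundles -/

/-- An `(F,G,H)`-metrized quantum vector bundle: a left Hilbert module `M` over a unital
C*-algebra `A` equipped with an `F`-quasi-Leibniz quantum compact metric space structure,
together with a D-norm `D` defined on a dense subspace `Ddom` of `M`, dominating the
C*-Hilbert norm, with compact unit ball, and satisfying the inner and modular quasi-Leibniz
inequalities with respect to `G` and `H`. -/
structure BundledMQVB (F : ℝ → ℝ → ℝ → ℝ → ℝ) (G : ℝ → ℝ → ℝ → ℝ) (H : ℝ → ℝ → ℝ) where
  A : Type
  [instRing : NormedRing A]
  [instStarRing : StarRing A]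
  [instCStar : CStarRing A]
  [instAlg : NormedAlgebra ℂ A]
  [instStarMod : StarModule ℂ A]
  [instComplete : CompleteSpace A]
  M : Type
  [instM : NormedAddCommGroup M]
  [instMC : Module ℂ M]
  [instMA : Module A M]
  [instTower : IsScalarTower ℂ A M]
  [instMComplete : CompleteSpace M]
  base : QLSpace A F
  inn : M → M → A
  Ddom : Set M
  D : M → ℝ
  inn_add_left : ∀ x y z : M, inn (x + y) z = inn x z + inn y z
  inn_smul_left : ∀ (a : A) (x y : M), inn (a • x) y = a * inn x y
  inn_smul_leftC : ∀ (c : ℂ) (x y : M), inn (c • x) y = c • inn x y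
  inn_star : ∀ x y : M, star (inn x y) = inn y x
  inn_pos : ∀ x : M, ∃ b : A, inn x x = star b * b
  inn_definite : ∀ x : M, inn x x = 0 → x = 0
  norm_eq : ∀ x : M, ‖x‖ = Real.sqrt ‖inn x x‖
  Ddom_dense : Dense Ddom
  Ddom_add : ∀ x ∈ Ddom, ∀ y ∈ Ddom, x + y ∈ Ddom
  Ddom_smul : ∀ (c : ℂ), ∀ x ∈ Ddom, c • x ∈ Ddom
  D_nonneg : ∀ x : M, 0 ≤ D x
  D_add : ∀ x ∈ Ddom, ∀ y ∈ Ddom, D (x + y) ≤ D x + D y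
  D_smul : ∀ (c : ℂ), ∀ x ∈ Ddom, D (c • x) = ‖c‖ * D x
  norm_le_D : ∀ x ∈ Ddom, ‖x‖ ≤ D x
  D_ball_compact : IsCompact {x : M | x ∈ Ddom ∧ D x ≤ 1}
  D_leibniz : ∀ a ∈ base.dom, ∀ x ∈ Ddom,
      a • x ∈ Ddom ∧ D (a • x) ≤ G ‖a‖ (base.L a) (D x)
  inn_leibniz : ∀ x ∈ Ddom, ∀ y ∈ Ddom,
      reEl (inn x y) ∈ base.dom ∧ imEl (inn x y) ∈ base.dom ∧
      base.L (reEl (inn x y)) ≤ H (D x) (D y) ∧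
      base.L (imEl (inn x y)) ≤ H (D x) (D y)

attribute [instance] BundledMQVB.instRing BundledMQVB.instStarRing BundledMQVB.instCStar
  BundledMQVB.instAlg BundledMQVB.instStarMod BundledMQVB.instComplete
  BundledMQVB.instM BundledMQVB.instMC BundledMQVB.instMA BundledMQVB.instTower
  BundledMQVB.instMComplete

variable {F : ℝ → ℝ → ℝ → ℝ → ℝ} {G : ℝ → ℝ → ℝ → ℝ} {H : ℝ → ℝ → ℝ}

/-- The closed ball of radius `r` for the D-norm of a metrized quantum vector bundle. -/
def BundledMQVB.Dball (Ω : BundledMQVB F G H) (r : ℝ) : Set Ω.M :=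
  {ω | ω ∈ Ω.Ddom ∧ Ω.D ω ≤ r}

/-- The modular Monge-Kantorovich metric of a metrized quantum vector bundle. -/
def BundledMQVB.mkD (Ω : BundledMQVB F G H) (x y : Ω.M) : ℝ :=
  sSup {r | ∃ ξ ∈ Ω.Ddom, Ω.D ξ ≤ 1 ∧ r = ‖Ω.inn x ξ - Ω.inn y ξ‖}

/-- The `A`-weak topology on the module of a metrized quantum vector bundle. -/
def BundledMQVB.aWeak (Ω : BundledMQVB F G H) : TopologicalSpace Ω.M :=
  TopologicalSpace.induced (fun (ω : Ω.M) (ξ : Ω.M) => Ω.inn ω ξ) Pi.topologicalSpace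
/-! ### Modular bridges -/

/-- A modular bridge between two metrized quantum vector bundles. -/
structure ModularBridge (ΩA ΩB : BundledMQVB F G H) where
  Dalg : Type
  [instDRing : NormedRing Dalg]
  [instDStarRing : StarRing Dalg]
  [instDCStar : CStarRing Dalg]
  [instDAlg : NormedAlgebra ℂ Dalg]
  [instDStarMod : StarModule ℂ Dalg]
  [instDComplete : CompleteSpace Dalg]
  J : Type
  [instJ : Nonempty J]
  pivot : Dalg
  piA : ΩA.A →⋆ₐ[ℂ] Dalg
  piB : ΩB.A →⋆ₐ[ℂ] Dalg
  piA_inj : Function.Injective piA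
  piB_inj : Function.Injective piB
  pivot_norm : ‖pivot‖ = 1
  levelSet_nonempty : pivotLevelNonempty pivot
  anchors : J → ΩA.M
  coanchors : J → ΩB.M
  anchors_mem : ∀ j, anchors j ∈ ΩA.Ddom
  anchors_le : ∀ j, ΩA.D (anchors j) ≤ 1
  coanchors_mem : ∀ j, coanchors j ∈ ΩB.Ddom
  coanchors_le : ∀ j, ΩB.D (coanchors j) ≤ 1

attribute [instance] ModularBridge.instDRing ModularBridge.instDStarRing
  ModularBridge.instDCStar ModularBridge.instDAlg ModularBridge.instDStarMod
  ModularBridge.instDComplete ModularBridge.instJ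

namespace ModularBridge

variable {ΩA ΩB : BundledMQVB F G H}

/-- The bridge seminorm of a modular bridge. -/
def bn (γ : ModularBridge ΩA ΩB) (a : ΩA.A) (b : ΩB.A) : ℝ :=
  ‖γ.piA a * γ.pivot - γ.pivot * γ.piB b‖

/-- The deck seminorm of a modular bridge. -/
def dn (γ : ModularBridge ΩA ΩB) (ω : ΩA.M) (η : ΩB.M) : ℝ :=
  ⨆ k : γ.J,
    max (γ.bn (ΩA.inn ω (γ.anchors k)) (ΩB.inn η (γ.coanchors k)))
        (γ.bn (ΩA.inn (γ.anchors k) ω) (ΩB.inn (γ.coanchors k) η))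

/-- The basic reach of a modular bridge. -/
def basicReach (γ : ModularBridge ΩA ΩB) : ℝ :=
  max
    (sSup {r | ∃ a ∈ ΩA.base.dom, ΩA.base.L a ≤ 1 ∧
        r = sInf {s | ∃ b ∈ ΩB.base.dom, ΩB.base.L b ≤ 1 ∧ s = γ.bn a b}})
    (sSup {r | ∃ b ∈ ΩB.base.dom, ΩB.base.L b ≤ 1 ∧
        r = sInf {s | ∃ a ∈ ΩA.base.dom, ΩA.base.L a ≤ 1 ∧ s = γ.bn a b}})

/-- The modular reach of a modular bridge. -/
def modularReach (γ : ModularBridge ΩA ΩB) : ℝ :=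
  ⨆ j : γ.J, γ.dn (γ.anchors j) (γ.coanchors j)

/-- The imprint of a modular bridge. -/
def imprint (γ : ModularBridge ΩA ΩB) : ℝ :=
  max (hausDist ΩA.mkD (Set.range γ.anchors) (ΩA.Dball 1))
      (hausDist ΩB.mkD (Set.range γ.coanchors) (ΩB.Dball 1))

/-- The reach of a modular bridge. -/
def reach (γ : ModularBridge ΩA ΩB) : ℝ :=
  max γ.basicReach (γ.modularReach + γ.imprint)

/-- The states of the bridge algebra in the 1-level set of the pivot. -/
def levelStates (γ : ModularBridge ΩA ΩB) : Set (CState γ.Dalg) :=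
  {φ | φ.toFun (star (1 - γ.pivot) * (1 - γ.pivot)) = 0 ∧
       φ.toFun ((1 - γ.pivot) * star (1 - γ.pivot)) = 0}

/-- The height of a modular bridge. -/
def height (γ : ModularBridge ΩA ΩB) : ℝ :=
  max
    (hausDist (mkDist ΩA.base.dom ΩA.base.L) (Set.univ : Set (CState ΩA.A))
      {ψ | ∃ φ ∈ γ.levelStates, ∀ a : ΩA.A, ψ.toFun a = φ.toFun (γ.piA a)})
    (hausDist (mkDist ΩB.base.dom ΩB.base.L) (Set.univ : Set (CState ΩB.A))
      {ψ | ∃ φ ∈ γ.levelStates, ∀ b : ΩB.A, ψ.toFun b = φ.toFun (γ.piB b)})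

/-- The length of a modular bridge. -/
def length (γ : ModularBridge ΩA ΩB) : ℝ := max γ.reach γ.height

/-- The `l`-modular target set of `ω` for a modular bridge. -/
def mtarget (γ : ModularBridge ΩA ΩB) (ω : ΩA.M) (l : ℝ) : Set ΩB.M :=
  {η | η ∈ ΩB.Ddom ∧ ΩB.D η ≤ l ∧ γ.dn ω η ≤ l * γ.reach}

/-- The `l`-target set of `a` for a modular bridge. -/
def atarget (γ : ModularBridge ΩA ΩB) (a : ΩA.A) (l : ℝ) : Set ΩB.A :=
  {b | b ∈ ΩB.base.dom ∧ ΩB.base.L b ≤ l ∧ γ.bn a b ≤ l * γ.basicReach}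

/-- The reverse of a modular bridge. -/
def reverse (γ : ModularBridge ΩA ΩB) : ModularBridge ΩB ΩA where
  Dalg := γ.Dalg
  J := γ.J
  pivot := star γ.pivot
  piA := γ.piB
  piB := γ.piA
  piA_inj := γ.piB_inj
  piB_inj := γ.piA_inj
  pivot_norm := by rw [norm_star]; exact γ.pivot_norm
  levelSet_nonempty := by
    obtain ⟨φ, h1, h2⟩ := γ.levelSet_nonempty
    refine ⟨φ, ?_, ?_⟩
    · have e1 : star ((1 : γ.Dalg) - star γ.pivot) = 1 - γ.pivot := by
        simp [star_sub]
      have e2 : (1 : γ.Dalg) - star γ.pivot = star (1 - γ.pivot) := by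
        simp [star_sub]
      rw [e1, e2]; exact h2
    · have e1 : star ((1 : γ.Dalg) - star γ.pivot) = 1 - γ.pivot := by
        simp [star_sub]
      have e2 : (1 : γ.Dalg) - star γ.pivot = star (1 - γ.pivot) := by
        simp [star_sub]
      rw [e1, e2]; exact h1
  anchors := γ.coanchors
  coanchors := γ.anchors
  anchors_mem := γ.coanchors_mem
  anchors_le := γ.coanchors_le
  coanchors_mem := γ.anchors_mem
  coanchors_le := γ.anchors_le

end ModularBridge

/-! ### Modular treks -/

/-- A modular trek: a finite chain of composable modular bridges. -/
inductive Trek (F : ℝ → ℝ → ℝ → ℝ → ℝ) (G : ℝ → ℝ → ℝ → ℝ) (H : ℝ → ℝ → ℝ) :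
    BundledMQVB F G H → BundledMQVB F G H → Type 1
  | single {ΩA ΩB : BundledMQVB F G H} (γ : ModularBridge ΩA ΩB) : Trek F G H ΩA ΩB
  | cons {ΩA ΩB ΩC : BundledMQVB F G H} (γ : ModularBridge ΩA ΩB)
      (Γ : Trek F G H ΩB ΩC) : Trek F G H ΩA ΩC

namespace Trek

/-- The length of a modular trek: the sum of the lengths of its bridges. -/
def length : ∀ {ΩA ΩB : BundledMQVB F G H}, Trek F G H ΩA ΩB → ℝ
  | _, _, .single γ => γ.length
  | _, _, .cons γ Γ => γ.length + Trek.length Γ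

/-- The modular target set of a modular trek (the set of endpoints of `l`-itineraries). -/
def mtarget : ∀ {ΩA ΩB : BundledMQVB F G H}, Trek F G H ΩA ΩB → ΩA.M → ℝ → Set ΩB.M
  | _, _, .single γ, ω, l => γ.mtarget ω l
  | _, _, .cons γ Γ, ω, l => {η | ∃ ξ ∈ γ.mtarget ω l, η ∈ Trek.mtarget Γ ξ l}

/-- The target set of a modular trek on the base algebras. -/
def atarget : ∀ {ΩA ΩB : BundledMQVB F G H}, Trek F G H ΩA ΩB → ΩA.A → ℝ → Set ΩB.A
  | _, _, .single γ, a, l => γ.atarget a l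
  | _, _, .cons γ Γ, a, l => {b | ∃ c ∈ γ.atarget a l, b ∈ Trek.atarget Γ c l}

end Trek


/-! ### Auxiliary lemmas for Statement 19 -/

namespace BundledMQVB

variable (Ω : BundledMQVB F G H)

lemma inn_zero_left (x : Ω.M) : Ω.inn 0 x = 0 := by
  have h := Ω.inn_smul_leftC 0 0 x
  simpa using h

lemma inn_zero_right (x : Ω.M) : Ω.inn x 0 = 0 := by
  rw [← Ω.inn_star 0 x, Ω.inn_zero_left, star_zero]

lemma inn_neg_left (x y : Ω.M) : Ω.inn (-x) y = - Ω.inn x y := by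
  have h := Ω.inn_smul_leftC (-1) x y
  simpa using h

lemma inn_sub_left (x y z : Ω.M) : Ω.inn (x - y) z = Ω.inn x z - Ω.inn y z := by
  rw [sub_eq_add_neg, Ω.inn_add_left, Ω.inn_neg_left, ← sub_eq_add_neg]

lemma inn_self_sa (x : Ω.M) : IsSelfAdjoint (Ω.inn x x) := Ω.inn_star x x

lemma norm_inn_self (x : Ω.M) : ‖Ω.inn x x‖ = ‖x‖ ^ 2 := by
  rw [Ω.norm_eq x]
  exact (Real.sq_sqrt (norm_nonneg _)).symm

lemma inn_smul_right (c : ℂ) (x y : Ω.M) : Ω.inn x (c • y) = (star c) • Ω.inn x y := by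
  rw [← Ω.inn_star (c • y) x, Ω.inn_smul_leftC, star_smul, Ω.inn_star]

/-- Cauchy-Schwarz for the module inner product. -/
lemma cs (x y : Ω.M) : ‖Ω.inn x y‖ ≤ ‖x‖ * ‖y‖ := by
  letI : CStarAlgebra Ω.A :=
    { (inferInstance : NormedRing Ω.A), (inferInstance : StarRing Ω.A),
      (inferInstance : CStarRing Ω.A), (inferInstance : NormedAlgebra ℂ Ω.A),
      (inferInstance : StarModule ℂ Ω.A), (inferInstance : CompleteSpace Ω.A) with }
  letI : PartialOrder Ω.A := CStarAlgebra.spectralOrder Ω.A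
  haveI : StarOrderedRing Ω.A := CStarAlgebra.spectralOrderedRing Ω.A
  rcases eq_or_ne x 0 with hx | hx
  · simp [hx, Ω.inn_zero_left]
  -- main case
  set n : ℝ := ‖x‖ ^ 2 with hn
  have hn0 : 0 < n := by
    have := norm_pos_iff.mpr hx
    positivity
  set a : Ω.A := Ω.inn y x with ha
  set Q : Ω.A := a * star a with hQ
  set R : Ω.A := Ω.inn y y with hR
  set u : Ω.M := a • x with hu
  set v : Ω.M := ((n : ℂ)) • y with hv
  have hsn : star ((n : ℝ) : ℂ) = ((n : ℝ) : ℂ) := by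
    simp [Complex.star_def, Complex.conj_ofReal]
  have hstar_a : star a = Ω.inn x y := Ω.inn_star y x
  have creal : ∀ z : Ω.A, ((n : ℝ) : ℂ) • z = n • z := fun z => by
    rw [← Complex.coe_algebraMap, algebraMap_smul]
  have h1 : ∀ w, Ω.inn w (u - v) = Ω.inn w u - Ω.inn w v := fun w => by
    rw [← Ω.inn_star (u - v) w, Ω.inn_sub_left, star_sub, Ω.inn_star, Ω.inn_star]
  have huu : Ω.inn u u = a * Ω.inn x x * star a := by
    rw [hu, Ω.inn_smul_left, ← Ω.inn_star (a • x) x, Ω.inn_smul_left, star_mul,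
      (Ω.inn_self_sa x).star_eq, ← mul_assoc]
  have huv : Ω.inn u v = (n : ℂ) • Q := by
    rw [hu, hv, Ω.inn_smul_left, Ω.inn_smul_right, hsn, mul_smul_comm, ← hstar_a, ← hQ]
  have hvu : Ω.inn v u = (n : ℂ) • Q := by
    rw [hu, hv, Ω.inn_smul_leftC, ← Ω.inn_star (a • x) y, Ω.inn_smul_left, star_mul,
      Ω.inn_star x y, ← ha, ← hQ]
  have hvv : Ω.inn v v = (n : ℂ) • ((n : ℂ) • R) := by
    rw [hv, Ω.inn_smul_leftC, Ω.inn_smul_right, hsn, hR]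
  have key : (0 : Ω.A) ≤ Ω.inn (u - v) (u - v) := by
    obtain ⟨b, hb⟩ := Ω.inn_pos (u - v)
    rw [hb]; exact star_mul_self_nonneg b
  have expand : Ω.inn (u - v) (u - v)
      = (a * Ω.inn x x * star a) - ((n : ℂ) • Q + (n : ℂ) • Q) + (n : ℂ) • ((n : ℂ) • R) := by
    rw [h1, Ω.inn_sub_left, Ω.inn_sub_left, huu, huv, hvu, hvv]; abel
  simp only [creal] at expand
  rw [expand] at key
  have hP : a * Ω.inn x x * star a ≤ n • Q := by
    have h := CStarAlgebra.star_right_conjugate_le_norm_smul (a := a) (b := Ω.inn x x) (Ω.inn_self_sa x)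
    rwa [Ω.norm_inn_self, ← hQ, ← hn] at h
  have h2 : n • Q + n • Q ≤ (a * Ω.inn x x * star a) + n • (n • R) := by
    rw [show (a * Ω.inn x x * star a) - (n • Q + n • Q) + n • (n • R)
        = ((a * Ω.inn x x * star a) + n • (n • R)) - (n • Q + n • Q) from by abel] at key
    exact sub_nonneg.mp key
  have h4 : n • Q ≤ n • (n • R) :=
    (add_le_add_iff_left (n • Q)).mp (h2.trans (add_le_add_left hP _))
  have hQ0 : (0 : Ω.A) ≤ n • Q := by
    have hs : star (((Real.sqrt n : ℝ) : ℂ) • star a) * (((Real.sqrt n : ℝ) : ℂ) • star a)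
        = n • Q := by
      rw [star_smul, star_star, smul_mul_smul_comm]
      rw [show star ((Real.sqrt n : ℝ) : ℂ) = ((Real.sqrt n : ℝ) : ℂ) by
        simp [Complex.star_def, Complex.conj_ofReal]]
      rw [← Complex.ofReal_mul, Real.mul_self_sqrt hn0.le, creal, ← hQ]
    rw [← hs]; exact star_mul_self_nonneg _
  have hnorm := CStarAlgebra.norm_le_norm_of_nonneg_of_le hQ0 h4
  rw [norm_smul, norm_smul, norm_smul] at hnorm
  have hQn : ‖Q‖ = ‖a‖ ^ 2 := by
    rw [hQ, CStarRing.norm_self_mul_star, sq]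
  have hRn : ‖R‖ = ‖y‖ ^ 2 := Ω.norm_inn_self y
  rw [hQn, hRn, Real.norm_eq_abs, abs_of_pos hn0] at hnorm
  have hfin : ‖a‖ ^ 2 ≤ n * ‖y‖ ^ 2 := (mul_le_mul_iff_right₀ hn0).mp hnorm
  rw [hn] at hfin
  rw [← hstar_a, norm_star]
  have h5 : ‖a‖ ^ 2 ≤ (‖x‖ * ‖y‖) ^ 2 := by rw [mul_pow]; exact hfin
  calc ‖a‖ = Real.sqrt (‖a‖ ^ 2) := (Real.sqrt_sq (norm_nonneg a)).symm
    _ ≤ Real.sqrt ((‖x‖ * ‖y‖) ^ 2) := Real.sqrt_le_sqrt h5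
    _ = ‖x‖ * ‖y‖ := Real.sqrt_sq (by positivity)

lemma norm_smulC (c : ℂ) (x : Ω.M) : ‖c • x‖ = ‖c‖ * ‖x‖ := by
  have h : Ω.inn (c • x) (c • x) = (c * star c) • Ω.inn x x := by
    rw [Ω.inn_smul_leftC, Ω.inn_smul_right, smul_smul]
  rw [Ω.norm_eq, h, norm_smul, norm_mul, norm_star,
    Real.sqrt_mul (by positivity), Real.sqrt_mul_self (norm_nonneg c), ← Ω.norm_eq]

lemma zero_mem_Ddom : (0 : Ω.M) ∈ Ω.Ddom := by
  haveI : Nonempty Ω.M := ⟨0⟩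
  obtain ⟨w, hw⟩ := Ω.Ddom_dense.nonempty
  simpa using Ω.Ddom_smul 0 w hw

lemma D_zero : Ω.D 0 = 0 := by
  haveI : Nonempty Ω.M := ⟨0⟩
  obtain ⟨w, hw⟩ := Ω.Ddom_dense.nonempty
  simpa using Ω.D_smul 0 w hw

lemma mkD_set_zero_mem (x y : Ω.M) :
    (0 : ℝ) ∈ {t | ∃ ξ ∈ Ω.Ddom, Ω.D ξ ≤ 1 ∧ t = ‖Ω.inn x ξ - Ω.inn y ξ‖} :=
  ⟨0, Ω.zero_mem_Ddom, by rw [Ω.D_zero]; exact zero_le_one,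
    by rw [Ω.inn_zero_right, Ω.inn_zero_right, sub_zero, norm_zero]⟩

lemma mkD_set_bound (x y : Ω.M) :
    ∀ t ∈ {t | ∃ ξ ∈ Ω.Ddom, Ω.D ξ ≤ 1 ∧ t = ‖Ω.inn x ξ - Ω.inn y ξ‖}, t ≤ ‖x - y‖ := by
  rintro t ⟨ξ, hξ, hD, rfl⟩
  rw [← Ω.inn_sub_left]
  calc ‖Ω.inn (x - y) ξ‖ ≤ ‖x - y‖ * ‖ξ‖ := Ω.cs _ _
    _ ≤ ‖x - y‖ * 1 :=
        mul_le_mul_of_nonneg_left ((Ω.norm_le_D ξ hξ).trans hD) (norm_nonneg _)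
    _ = ‖x - y‖ := mul_one _

lemma mkD_bddAbove (x y : Ω.M) :
    BddAbove {t | ∃ ξ ∈ Ω.Ddom, Ω.D ξ ≤ 1 ∧ t = ‖Ω.inn x ξ - Ω.inn y ξ‖} :=
  ⟨‖x - y‖, fun t ht => Ω.mkD_set_bound x y t ht⟩

lemma mkD_le_norm (x y : Ω.M) : Ω.mkD x y ≤ ‖x - y‖ :=
  csSup_le ⟨0, Ω.mkD_set_zero_mem x y⟩ (Ω.mkD_set_bound x y)

lemma mkD_nonneg (x y : Ω.M) : 0 ≤ Ω.mkD x y :=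
  le_csSup (Ω.mkD_bddAbove x y) (Ω.mkD_set_zero_mem x y)

lemma mkD_self (x : Ω.M) : Ω.mkD x x = 0 :=
  le_antisymm (by simpa using Ω.mkD_le_norm x x) (Ω.mkD_nonneg x x)

lemma mkD_triangle (x y z : Ω.M) : Ω.mkD x z ≤ Ω.mkD x y + Ω.mkD y z := by
  apply csSup_le ⟨0, Ω.mkD_set_zero_mem x z⟩
  rintro t ⟨ξ, hξ, hD, rfl⟩
  have h1 : ‖Ω.inn x ξ - Ω.inn y ξ‖ ≤ Ω.mkD x y :=
    le_csSup (Ω.mkD_bddAbove x y) ⟨ξ, hξ, hD, rfl⟩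
  have h2 : ‖Ω.inn y ξ - Ω.inn z ξ‖ ≤ Ω.mkD y z :=
    le_csSup (Ω.mkD_bddAbove y z) ⟨ξ, hξ, hD, rfl⟩
  have h3 := dist_triangle (Ω.inn x ξ) (Ω.inn y ξ) (Ω.inn z ξ)
  rw [dist_eq_norm, dist_eq_norm, dist_eq_norm] at h3
  linarith

lemma sub_mem_Ddom {x y : Ω.M} (hx : x ∈ Ω.Ddom) (hy : y ∈ Ω.Ddom) : x - y ∈ Ω.Ddom := by
  have h := Ω.Ddom_add x hx _ (Ω.Ddom_smul (-1) y hy)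
  simpa [sub_eq_add_neg] using h

lemma D_sub_le {x y : Ω.M} (hx : x ∈ Ω.Ddom) (hy : y ∈ Ω.Ddom) :
    Ω.D (x - y) ≤ Ω.D x + Ω.D y := by
  rw [sub_eq_add_neg, ← neg_one_smul ℂ y]
  refine (Ω.D_add x hx _ (Ω.Ddom_smul (-1) y hy)).trans ?_
  rw [Ω.D_smul (-1) y hy]
  simp

lemma norm_sq_le_mkD {x y : Ω.M} (hx : x ∈ Ω.Ddom) (hy : y ∈ Ω.Ddom) {r : ℝ}
    (hxr : Ω.D x ≤ r) (hyr : Ω.D y ≤ r) : ‖x - y‖ ^ 2 ≤ 2 * r * Ω.mkD x y := by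
  have hz : x - y ∈ Ω.Ddom := Ω.sub_mem_Ddom hx hy
  have hDz : Ω.D (x - y) ≤ 2 * r := (Ω.D_sub_le hx hy).trans (by linarith)
  by_cases h0 : Ω.D (x - y) = 0
  · have hnz : ‖x - y‖ = 0 := le_antisymm (h0 ▸ Ω.norm_le_D _ hz) (norm_nonneg _)
    have hr0 : 0 ≤ r := le_trans (Ω.D_nonneg x) hxr
    have hm := Ω.mkD_nonneg x y
    rw [hnz]
    nlinarith
  · have hDz0 : 0 < Ω.D (x - y) := lt_of_le_of_ne (Ω.D_nonneg _) (Ne.symm h0)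
    set c : ℝ := (Ω.D (x - y))⁻¹ with hc
    have hc0 : 0 < c := inv_pos.mpr hDz0
    have hnc : ‖((c : ℝ) : ℂ)‖ = c := by
      rw [Complex.norm_real, Real.norm_eq_abs, abs_of_pos hc0]
    have hmem : ((c : ℝ) : ℂ) • (x - y) ∈ Ω.Ddom := Ω.Ddom_smul _ _ hz
    have hD1 : Ω.D (((c : ℝ) : ℂ) • (x - y)) ≤ 1 := by
      rw [Ω.D_smul _ _ hz, hnc, hc, inv_mul_cancel₀ h0]
    have hval : ‖Ω.inn x (((c : ℝ) : ℂ) • (x - y)) - Ω.inn y (((c : ℝ) : ℂ) • (x - y))‖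
        = c * ‖x - y‖ ^ 2 := by
      rw [← Ω.inn_sub_left, Ω.inn_smul_right,
        show star ((c : ℝ) : ℂ) = ((c : ℝ) : ℂ) by
          simp [Complex.star_def, Complex.conj_ofReal],
        norm_smul, Ω.norm_inn_self, hnc]
    have hle : c * ‖x - y‖ ^ 2 ≤ Ω.mkD x y :=
      le_csSup (Ω.mkD_bddAbove x y) ⟨_, hmem, hD1, hval.symm⟩
    calc ‖x - y‖ ^ 2 = Ω.D (x - y) * (c * ‖x - y‖ ^ 2) := by
          rw [hc]; field_simp
      _ ≤ 2 * r * Ω.mkD x y :=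
          mul_le_mul hDz hle (mul_nonneg hc0.le (sq_nonneg _)) (by linarith)

lemma ball_compact {r : ℝ} (hr : 0 < r) :
    IsCompact {x : Ω.M | x ∈ Ω.Ddom ∧ Ω.D x ≤ r} := by
  have hcont : Continuous (fun x : Ω.M => ((r : ℝ) : ℂ) • x) :=
    AddMonoidHomClass.continuous_of_bound
      (AddMonoidHom.mk' (fun x : Ω.M => ((r : ℝ) : ℂ) • x) (fun a b => smul_add _ a b))
      ‖((r : ℝ) : ℂ)‖ (fun x => le_of_eq (Ω.norm_smulC _ x))
  have hnr : ‖((r : ℝ) : ℂ)‖ = r := by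
    rw [Complex.norm_real, Real.norm_eq_abs, abs_of_pos hr]
  have hnri : ‖((r⁻¹ : ℝ) : ℂ)‖ = r⁻¹ := by
    rw [Complex.norm_real, Real.norm_eq_abs, abs_of_pos (inv_pos.mpr hr)]
  have himg : {x : Ω.M | x ∈ Ω.Ddom ∧ Ω.D x ≤ r}
      = (fun x : Ω.M => ((r : ℝ) : ℂ) • x) '' {x | x ∈ Ω.Ddom ∧ Ω.D x ≤ 1} := by
    ext w
    constructor
    · rintro ⟨hw, hwr⟩
      refine ⟨((r⁻¹ : ℝ) : ℂ) • w, ⟨Ω.Ddom_smul _ _ hw, ?_⟩, ?_⟩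
      · rw [Ω.D_smul _ _ hw, hnri]
        calc r⁻¹ * Ω.D w ≤ r⁻¹ * r := mul_le_mul_of_nonneg_left hwr (inv_nonneg.mpr hr.le)
          _ = 1 := inv_mul_cancel₀ hr.ne'
      · show ((r : ℝ) : ℂ) • (((r⁻¹ : ℝ) : ℂ) • w) = w
        rw [smul_smul, ← Complex.ofReal_mul, mul_inv_cancel₀ hr.ne']
        simp
    · rintro ⟨v, ⟨hv, hv1⟩, rfl⟩
      refine ⟨Ω.Ddom_smul _ _ hv, ?_⟩
      rw [Ω.D_smul _ _ hv, hnr]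
      calc r * Ω.D v ≤ r * 1 := mul_le_mul_of_nonneg_left hv1 hr.le
        _ = r := mul_one r
  rw [himg]
  exact Ω.D_ball_compact.image hcont

lemma inn_right_injective :
    Function.Injective (fun (ω : Ω.M) (ξ : Ω.M) => Ω.inn ω ξ) := by
  intro p q h
  have h' : ∀ ξ, Ω.inn p ξ = Ω.inn q ξ := fun ξ => congrFun h ξ
  have h0 : Ω.inn (p - q) (p - q) = 0 := by
    rw [Ω.inn_sub_left, h' (p - q), sub_self]
  exact sub_eq_zero.mp (Ω.inn_definite _ h0)

lemma aWeak_le_norm : (inferInstance : TopologicalSpace Ω.M) ≤ Ω.aWeak := by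
  have hcont : Continuous (fun (ω : Ω.M) (ξ : Ω.M) => Ω.inn ω ξ) :=
    continuous_pi fun ξ =>
      AddMonoidHomClass.continuous_of_bound
        (AddMonoidHom.mk' (fun ω : Ω.M => Ω.inn ω ξ) (fun a b => Ω.inn_add_left a b ξ))
        ‖ξ‖ (fun ω => by rw [mul_comm]; exact Ω.cs ω ξ)
  exact continuous_iff_le_induced.mp hcont

end BundledMQVB

theorem ballTopology_eq_induced_of_metric {X Y : Type*} [PseudoMetricSpace Y] (f : X → Y)
    (d : X → X → ℝ) (dself : ∀ x, d x x = 0)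
    (tri : ∀ x y z, d x z ≤ d x y + d y z)
    (dle : ∀ x y, d x y ≤ dist (f x) (f y))
    (lower : ∀ ε : ℝ, 0 < ε → ∃ δ > 0, ∀ x y, d x y < δ → dist (f x) (f y) < ε) :
    ballTopology d = TopologicalSpace.induced f inferInstance := by
  apply le_antisymm
  · rw [TopologicalSpace.le_def]
    intro U hU
    rw [isOpen_induced_iff] at hU
    obtain ⟨V, hV, rfl⟩ := hU
    letI : TopologicalSpace X := ballTopology d
    rw [isOpen_iff_forall_mem_open]
    intro x hx
    obtain ⟨ε, hε, hball⟩ := Metric.isOpen_iff.mp hV (f x) hx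
    obtain ⟨δ, hδ, hd⟩ := lower ε hε
    refine ⟨{y | d x y < δ}, ?_, ?_, ?_⟩
    · intro y hy
      exact hball (Metric.mem_ball.mpr (by rw [dist_comm]; exact hd x y hy))
    · exact TopologicalSpace.GenerateOpen.basic _ ⟨x, δ, hδ, rfl⟩
    · show d x x < δ
      rw [dself]; exact hδ
  · apply le_generateFrom
    rintro s ⟨x, ε, hε, rfl⟩
    letI : TopologicalSpace X := TopologicalSpace.induced f inferInstance
    rw [isOpen_iff_mem_nhds]
    intro y hy
    rw [Set.mem_setOf_eq] at hy
    rw [nhds_induced, Filter.mem_comap]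
    refine ⟨Metric.ball (f y) (ε - d x y), Metric.ball_mem_nhds _ (by linarith), ?_⟩
    intro z hz
    have hzy := Metric.mem_ball.mp hz
    rw [dist_comm] at hzy
    have h1 := dle y z
    show d x z < ε
    calc d x z ≤ d x y + d y z := tri x y z
      _ < ε := by linarith

/-- for every `r > 0`, the modular Monge-Kantorovich metric of a metrized
quantum vector bundle metrizes the `A`-weak topology on the closed `r`-ball of the D-norm,
and therefore also metrizes the norm topology on this ball. -/
theorem statement19 {F : ℝ → ℝ → ℝ → ℝ → ℝ} {G : ℝ → ℝ → ℝ → ℝ} {H : ℝ → ℝ → ℝ}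
    (hFGH : AdmissibleTriple F G H) (Ω : BundledMQVB F G H) (r : ℝ) (hr : 0 < r) :
    ballTopology (fun p q : {ω : Ω.M // ω ∈ Ω.Ddom ∧ Ω.D ω ≤ r} => Ω.mkD p.1 q.1)
      = TopologicalSpace.induced (Subtype.val : {ω : Ω.M // ω ∈ Ω.Ddom ∧ Ω.D ω ≤ r} → Ω.M)
          Ω.aWeak ∧
    ballTopology (fun p q : {ω : Ω.M // ω ∈ Ω.Ddom ∧ Ω.D ω ≤ r} => Ω.mkD p.1 q.1)
      = TopologicalSpace.induced (Subtype.val : {ω : Ω.M // ω ∈ Ω.Ddom ∧ Ω.D ω ≤ r} → Ω.M)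
          (inferInstance : TopologicalSpace Ω.M) := by
  have hr2 : (0 : ℝ) < 2 * r := by linarith
  -- the metric identification with the norm topology
  have key2 : ballTopology (fun p q : {ω : Ω.M // ω ∈ Ω.Ddom ∧ Ω.D ω ≤ r} => Ω.mkD p.1 q.1)
      = TopologicalSpace.induced
          (Subtype.val : {ω : Ω.M // ω ∈ Ω.Ddom ∧ Ω.D ω ≤ r} → Ω.M)
          (inferInstance : TopologicalSpace Ω.M) := by
    apply ballTopology_eq_induced_of_metric
    · exact fun p => Ω.mkD_self p.1
    · exact fun p q s => Ω.mkD_triangle p.1 q.1 s.1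
    · intro p q
      rw [dist_eq_norm]
      exact Ω.mkD_le_norm p.1 q.1
    · intro ε hε
      refine ⟨ε ^ 2 / (2 * r), by positivity, fun p q h => ?_⟩
      have hb := Ω.norm_sq_le_mkD p.2.1 q.2.1 p.2.2 q.2.2
      have h2 : 2 * r * Ω.mkD p.1 q.1 < 2 * r * (ε ^ 2 / (2 * r)) :=
        mul_lt_mul_of_pos_left h hr2
      rw [mul_comm (2 * r) (ε ^ 2 / (2 * r)), div_mul_cancel₀ _ hr2.ne'] at h2
      have h3 : ‖p.1 - q.1‖ ^ 2 < ε ^ 2 := lt_of_le_of_lt hb h2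
      rw [dist_eq_norm]
      exact lt_of_pow_lt_pow_left₀ 2 hε.le h3
  -- the weak topology identification
  have hT : TopologicalSpace.induced
        (Subtype.val : {ω : Ω.M // ω ∈ Ω.Ddom ∧ Ω.D ω ≤ r} → Ω.M)
        (inferInstance : TopologicalSpace Ω.M)
      = TopologicalSpace.induced Subtype.val Ω.aWeak := by
    have h1 : TopologicalSpace.induced
          (Subtype.val : {ω : Ω.M // ω ∈ Ω.Ddom ∧ Ω.D ω ≤ r} → Ω.M)
          (inferInstance : TopologicalSpace Ω.M)
        ≤ TopologicalSpace.induced Subtype.val Ω.aWeak := induced_mono Ω.aWeak_le_norm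
    refine le_antisymm h1 ?_
    haveI hcs : CompactSpace {ω : Ω.M // ω ∈ Ω.Ddom ∧ Ω.D ω ≤ r} :=
      isCompact_iff_compactSpace.mp (Ω.ball_compact hr)
    have hinj : Function.Injective
        (fun (p : {ω : Ω.M // ω ∈ Ω.Ddom ∧ Ω.D ω ≤ r}) (ξ : Ω.M) => Ω.inn p.1 ξ) := by
      intro p q h
      exact Subtype.ext (Ω.inn_right_injective h)
    have heq : TopologicalSpace.induced
          (Subtype.val : {ω : Ω.M // ω ∈ Ω.Ddom ∧ Ω.D ω ≤ r} → Ω.M) Ω.aWeak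
        = TopologicalSpace.induced
            (fun (p : {ω : Ω.M // ω ∈ Ω.Ddom ∧ Ω.D ω ≤ r}) (ξ : Ω.M) => Ω.inn p.1 ξ)
            Pi.topologicalSpace := induced_compose
    have hT2 : @T2Space _ (TopologicalSpace.induced
        (Subtype.val : {ω : Ω.M // ω ∈ Ω.Ddom ∧ Ω.D ω ≤ r} → Ω.M) Ω.aWeak) := by
      rw [heq]
      letI := TopologicalSpace.induced
        (fun (p : {ω : Ω.M // ω ∈ Ω.Ddom ∧ Ω.D ω ≤ r}) (ξ : Ω.M) => Ω.inn p.1 ξ)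
        (Pi.topologicalSpace (Y := fun _ : Ω.M => Ω.A))
      exact Topology.IsEmbedding.t2Space ⟨⟨rfl⟩, hinj⟩
    have hid : @Continuous _ _ instTopologicalSpaceSubtype
        (TopologicalSpace.induced
          (Subtype.val : {ω : Ω.M // ω ∈ Ω.Ddom ∧ Ω.D ω ≤ r} → Ω.M) Ω.aWeak) id :=
      continuous_id_iff_le.mpr h1
    have hc2 := @Continuous.continuous_symm_of_equiv_compact_to_t2 _ _
      instTopologicalSpaceSubtype
      (TopologicalSpace.induced
        (Subtype.val : {ω : Ω.M // ω ∈ Ω.Ddom ∧ Ω.D ω ≤ r} → Ω.M) Ω.aWeak)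
      hcs hT2 (Equiv.refl _) hid
    exact continuous_id_iff_le.mp hc2
  exact ⟨key2.trans hT, key2⟩
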